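/- Let p : (0,1) → [1,∞) be nondecreasing with p(1) < ∞ and suppose ∫_a^1 (a^{1/p'(a)} x^{-1/p'(x)})^{p(x)} dx/x ≤ C for all a ∈ (0,1). Then there exists C₄ > 0 such that ∫_a^1 x^{-p⁺/p'(x)} dx/x ≤ C₄ a^{-p⁺/p'(a)} for all a ∈ (0,1), where p⁺ = sup_{x∈(0,1)} p(x). -/

import Mathlib

open MeasureTheory Set Real

private lemma clamp_meas (p : ℝ → ℝ) (hmono : MonotoneOn p (Set.Ioc 0 1))
    {a : ℝ} (ha : 0 < a) (ha1 : a ≤ 1) :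
    ∃ q : ℝ → ℝ, Measurable q ∧ ∀ x ∈ Set.Icc a 1, q x = p x := by
  refine ⟨fun x => p (min (max x a) 1), ?_, ?_⟩
  · have hqm : Monotone fun x => p (min (max x a) 1) := by
      intro x y hxy
      have hx : min (max x a) 1 ∈ Set.Ioc (0:ℝ) 1 :=
        ⟨lt_min (lt_of_lt_of_le ha (le_max_right _ _)) one_pos, min_le_right _ _⟩
      have hy : min (max y a) 1 ∈ Set.Ioc (0:ℝ) 1 :=
        ⟨lt_min (lt_of_lt_of_le ha (le_max_right _ _)) one_pos, min_le_right _ _⟩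
      exact hmono hx hy (min_le_min (max_le_max hxy le_rfl) le_rfl)
    exact hqm.measurable
  · intro x hx
    show p (min (max x a) 1) = p x
    rw [max_eq_left hx.1, min_eq_left hx.2]

private lemma integrableOn_of_bdd {f : ℝ → ℝ} {s : Set ℝ} (hs : MeasurableSet s)
    (hμ : volume s < ⊤) (hf : AEStronglyMeasurable f (volume.restrict s)) {B : ℝ}
    (hB : ∀ x ∈ s, |f x| ≤ B) : IntegrableOn f s := by
  refine Integrable.mono' (g := fun _ => B) (integrableOn_const hμ.ne) hf ?_
  filter_upwards [ae_restrict_mem hs] with x hx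
  simpa [Real.norm_eq_abs] using hB x hx

/-- From the modular integral condition one derives the Zygmund-type
condition for the power `p⁺/p'(x)`. -/
theorem stmt_9 (p : ℝ → ℝ) (C : ℝ)
    (hmono : MonotoneOn p (Set.Ioc 0 1))
    (hp1 : ∀ x ∈ Set.Ioc (0:ℝ) 1, 1 ≤ p x)
    (hC : 0 < C)
    (hint : ∀ a ∈ Set.Ioo (0:ℝ) 1,
      ∫ x in Set.Ioc a 1,
        (a ^ (1 - 1 / p a) * x ^ (-(1 - 1 / p x))) ^ p x / x ≤ C) :
    ∃ C₄ > 0, ∀ a ∈ Set.Ioo (0:ℝ) 1,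
      ∫ x in Set.Ioc a 1,
          x ^ (-(sSup (p '' Set.Ioo 0 1) * (1 - 1 / p x))) / x
        ≤ C₄ * a ^ (-(sSup (p '' Set.Ioo 0 1) * (1 - 1 / p a))) := by
  have hp11 : 1 ≤ p 1 := hp1 1 ⟨one_pos, le_rfl⟩
  have hppos : ∀ x ∈ Set.Ioc (0:ℝ) 1, 0 < p x := fun x hx =>
    lt_of_lt_of_le one_pos (hp1 x hx)
  have he0 : ∀ x ∈ Set.Ioc (0:ℝ) 1, 0 ≤ 1 - 1 / p x := by
    intro x hx
    have h1 : 1 / p x ≤ 1 := by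
      rw [div_le_one (hppos x hx)]; exact hp1 x hx
    linarith
  have he1 : ∀ x ∈ Set.Ioc (0:ℝ) 1, 1 - 1 / p x ≤ 1 := by
    intro x hx
    have h1 : 0 ≤ 1 / p x := le_of_lt (one_div_pos.2 (hppos x hx))
    linarith [hppos x hx]
  have hφ1 : ∀ x ∈ Set.Ioc (0:ℝ) 1, 1 ≤ x ^ (-(1 - 1 / p x)) := fun x hx =>
    Real.one_le_rpow_of_pos_of_le_one_of_nonpos hx.1 hx.2 (neg_nonpos.2 (he0 x hx))
  have hφle : ∀ x ∈ Set.Ioc (0:ℝ) 1, x ^ (-(1 - 1 / p x)) ≤ x⁻¹ := by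
    intro x hx
    have h := Real.rpow_le_rpow_of_exponent_ge hx.1 hx.2
      (by linarith [he1 x hx] : (-1 : ℝ) ≤ -(1 - 1 / p x))
    rwa [Real.rpow_neg_one] at h
  -- facts about M
  have hbdd : BddAbove (p '' Set.Ioo 0 1) := by
    refine ⟨p 1, ?_⟩
    rintro _ ⟨x, hx, rfl⟩
    exact hmono ⟨hx.1, hx.2.le⟩ ⟨one_pos, le_rfl⟩ hx.2.le
  set M := sSup (p '' Set.Ioo 0 1) with hMdef
  have hMub : ∀ x ∈ Set.Ioo (0:ℝ) 1, p x ≤ M := fun x hx => le_csSup hbdd ⟨x, hx, rfl⟩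
  have hM1 : 1 ≤ M :=
    le_trans (hp1 (1/2) (by norm_num)) (hMub (1/2) (by norm_num))
  have hM0 : 0 ≤ M := by linarith
  -- the constant of almost-decreasingness
  have hlog2 : 0 < Real.log 2 := Real.log_pos one_lt_two
  obtain ⟨c, hcdef⟩ : ∃ c : ℝ, c = 2 + 2 * C / Real.log 2 := ⟨_, rfl⟩
  have hc2 : 2 ≤ c := by
    have h : 0 ≤ 2 * C / Real.log 2 := by positivity
    linarith
  have hc1 : 1 ≤ c := by linarith
  have hc0 : 0 < c := by linarith
  -- integrability of the modular integrand
  have hHmeas : ∀ a ∈ Set.Ioo (0:ℝ) 1,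
      AEStronglyMeasurable
        (fun t => (a ^ (1 - 1 / p a) * t ^ (-(1 - 1 / p t))) ^ p t / t)
        (volume.restrict (Set.Ioc a 1)) := by
    intro a ha
    obtain ⟨q, hq, hqp⟩ := clamp_meas p hmono ha.1 ha.2.le
    have hmeas : Measurable (fun t =>
        Real.exp (Real.log (a ^ (1 - 1 / p a)
          * Real.exp (Real.log t * (-(1 - 1 / q t)))) * q t) / t) := by
      have hexp : Measurable fun t => -(1 - 1 / q t) :=
        (measurable_const.sub (measurable_const.div hq)).neg
      exact (Real.measurable_exp.comp ((Real.measurable_log.comp (measurable_const.mul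
        (Real.measurable_exp.comp (Real.measurable_log.mul hexp)))).mul hq)).div
        measurable_id
    refine hmeas.aestronglyMeasurable.restrict.congr ?_
    filter_upwards [ae_restrict_mem measurableSet_Ioc] with t ht
    have ht0 : (0:ℝ) < t := lt_trans ha.1 ht.1
    have hbase : 0 < a ^ (1 - 1 / p a) * t ^ (-(1 - 1 / p t)) :=
      mul_pos (Real.rpow_pos_of_pos ha.1 _) (Real.rpow_pos_of_pos ht0 _)
    rw [hqp t ⟨ht.1.le, ht.2⟩, ← Real.rpow_def_of_pos ht0,
      ← Real.rpow_def_of_pos hbase]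
  have hHint : ∀ a ∈ Set.Ioo (0:ℝ) 1,
      IntegrableOn (fun t => (a ^ (1 - 1 / p a) * t ^ (-(1 - 1 / p t))) ^ p t / t)
        (Set.Ioc a 1) := by
    intro a ha
    refine integrableOn_of_bdd measurableSet_Ioc measure_Ioc_lt_top (hHmeas a ha)
      (B := max 1 a⁻¹ ^ p 1 * a⁻¹) ?_
    intro t ht
    have htI : t ∈ Set.Ioc (0:ℝ) 1 := ⟨lt_trans ha.1 ht.1, ht.2⟩
    have ht0 : 0 < t := htI.1
    have hb0 : 0 ≤ a ^ (1 - 1 / p a) * t ^ (-(1 - 1 / p t)) :=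
      mul_nonneg (Real.rpow_nonneg ha.1.le _) (Real.rpow_nonneg ht0.le _)
    have hb1 : a ^ (1 - 1 / p a) ≤ 1 :=
      Real.rpow_le_one ha.1.le ha.2.le (he0 a ⟨ha.1, ha.2.le⟩)
    have hb2 : t ^ (-(1 - 1 / p t)) ≤ a⁻¹ :=
      le_trans (hφle t htI) (inv_anti₀ ha.1 ht.1.le)
    have hble : a ^ (1 - 1 / p a) * t ^ (-(1 - 1 / p t)) ≤ a⁻¹ := by
      have := mul_le_mul hb1 hb2 (Real.rpow_nonneg ht0.le _) zero_le_one
      rwa [one_mul] at this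
    have h1 : (a ^ (1 - 1 / p a) * t ^ (-(1 - 1 / p t))) ^ p t ≤ max 1 a⁻¹ ^ p t :=
      Real.rpow_le_rpow hb0 (hble.trans (le_max_right _ _)) (hppos t htI).le
    have h2 : max 1 a⁻¹ ^ p t ≤ max 1 a⁻¹ ^ p 1 :=
      Real.rpow_le_rpow_of_exponent_le (le_max_left _ _)
        (hmono htI ⟨one_pos, le_rfl⟩ htI.2)
    have h3 : t⁻¹ ≤ a⁻¹ := inv_anti₀ ha.1 ht.1.le
    have habs : |(a ^ (1 - 1 / p a) * t ^ (-(1 - 1 / p t))) ^ p t / t|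
        = (a ^ (1 - 1 / p a) * t ^ (-(1 - 1 / p t))) ^ p t / t :=
      abs_of_nonneg (div_nonneg (Real.rpow_nonneg hb0 _) ht0.le)
    rw [habs, div_eq_mul_inv]
    exact mul_le_mul (h1.trans h2) h3 (inv_nonneg.2 ht0.le)
      (Real.rpow_nonneg (le_max_of_le_left zero_le_one) _)
  -- almost decreasingness of x ^ (-(1 - 1/p x))
  have had : ∀ a ∈ Set.Ioo (0:ℝ) 1, ∀ x ∈ Set.Ioc a 1,
      x ^ (-(1 - 1 / p x)) ≤ c * a ^ (-(1 - 1 / p a)) := by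
    intro a ha x hx
    have haI : a ∈ Set.Ioc (0:ℝ) 1 := ⟨ha.1, ha.2.le⟩
    have hxI : x ∈ Set.Ioc (0:ℝ) 1 := ⟨ha.1.trans hx.1, hx.2⟩
    have hx0 : 0 < x := hxI.1
    have hv1 : 1 ≤ a ^ (-(1 - 1 / p a)) := hφ1 a haI
    have hv0 : 0 < a ^ (-(1 - 1 / p a)) := lt_of_lt_of_le one_pos hv1
    by_cases hcase : x ^ (-(1 - 1 / p x)) ≤ 2 * a ^ (-(1 - 1 / p a))
    · calc x ^ (-(1 - 1 / p x)) ≤ 2 * a ^ (-(1 - 1 / p a)) := hcase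
        _ ≤ c * a ^ (-(1 - 1 / p a)) := mul_le_mul_of_nonneg_right hc2 hv0.le
    push_neg at hcase
    have hu2 : 2 < x ^ (-(1 - 1 / p x)) := by nlinarith
    have hxhalf : x < 1/2 := by
      by_contra h
      push_neg at h
      have h1 : x ^ (-(1 - 1 / p x)) ≤ x⁻¹ := hφle x hxI
      have h2 : x⁻¹ ≤ 2 := by
        have := inv_anti₀ (by norm_num : (0:ℝ) < 1/2) h
        simpa using this
      linarith
    have hx2 : 2 * x ≤ 1 := by linarith
    have hxle : x ≤ 2 * x := by linarith
    have hsub : Set.Ioc x (2*x) ⊆ Set.Ioc a 1 := fun t ht =>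
      ⟨lt_trans hx.1 ht.1, ht.2.trans hx2⟩
    -- pointwise lower bound on Ioc x (2x)
    have hpoint : ∀ t ∈ Set.Ioc x (2*x),
        x ^ (-(1 - 1 / p x)) / (2 * a ^ (-(1 - 1 / p a))) * t⁻¹
          ≤ (a ^ (1 - 1 / p a) * t ^ (-(1 - 1 / p t))) ^ p t / t := by
      intro t ht
      have htI : t ∈ Set.Ioc (0:ℝ) 1 := ⟨hx0.trans ht.1, ht.2.trans hx2⟩
      have ht0 : 0 < t := htI.1
      have hu0 : 0 ≤ x ^ (-(1 - 1 / p x)) := Real.rpow_nonneg hx0.le _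
      -- φ t ≥ φ x / 2
      have s1 : t ^ (-(1 - 1 / p x)) ≤ t ^ (-(1 - 1 / p t)) := by
        apply Real.rpow_le_rpow_of_exponent_ge ht0 htI.2
        have hpxt : p x ≤ p t := hmono hxI htI ht.1.le
        have hd : 1 / p t ≤ 1 / p x := one_div_le_one_div_of_le (hppos x hxI) hpxt
        linarith
      have s2 : (2*x) ^ (-(1 - 1 / p x)) ≤ t ^ (-(1 - 1 / p x)) :=
        Real.rpow_le_rpow_of_nonpos ht0 ht.2 (neg_nonpos.2 (he0 x hxI))
      have s3 : (2*x) ^ (-(1 - 1 / p x))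
          = 2 ^ (-(1 - 1 / p x)) * x ^ (-(1 - 1 / p x)) :=
        Real.mul_rpow (by norm_num) hx0.le
      have s4 : (1/2 : ℝ) ≤ 2 ^ (-(1 - 1 / p x)) := by
        have h := Real.rpow_le_rpow_of_exponent_le one_le_two
          (by linarith [he1 x hxI] : (-1:ℝ) ≤ -(1 - 1 / p x))
        rw [Real.rpow_neg_one] at h
        calc (1/2 : ℝ) = 2⁻¹ := by norm_num
          _ ≤ _ := h
      have hphit : x ^ (-(1 - 1 / p x)) / 2 ≤ t ^ (-(1 - 1 / p t)) := by
        nlinarith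
      have hainv : a ^ (1 - 1 / p a) = (a ^ (-(1 - 1 / p a)))⁻¹ := by
        rw [Real.rpow_neg ha.1.le, inv_inv]
      have hbB : x ^ (-(1 - 1 / p x)) / (2 * a ^ (-(1 - 1 / p a)))
          ≤ a ^ (1 - 1 / p a) * t ^ (-(1 - 1 / p t)) := by
        rw [hainv, inv_mul_eq_div, div_le_div_iff₀ (by positivity) hv0]
        nlinarith
      have hB1 : 1 < x ^ (-(1 - 1 / p x)) / (2 * a ^ (-(1 - 1 / p a))) := by
        rw [lt_div_iff₀ (by positivity)]
        linarith
      have hr1 : 1 ≤ a ^ (1 - 1 / p a) * t ^ (-(1 - 1 / p t)) := le_trans hB1.le hbB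
      have hrp : a ^ (1 - 1 / p a) * t ^ (-(1 - 1 / p t))
          ≤ (a ^ (1 - 1 / p a) * t ^ (-(1 - 1 / p t))) ^ p t := by
        nth_rewrite 1 [← Real.rpow_one (a ^ (1 - 1 / p a) * t ^ (-(1 - 1 / p t)))]
        exact Real.rpow_le_rpow_of_exponent_le hr1 (hp1 t htI)
      calc x ^ (-(1 - 1 / p x)) / (2 * a ^ (-(1 - 1 / p a))) * t⁻¹
          ≤ (a ^ (1 - 1 / p a) * t ^ (-(1 - 1 / p t))) ^ p t * t⁻¹ :=
            mul_le_mul_of_nonneg_right (hbB.trans hrp) (inv_nonneg.2 ht0.le)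
        _ = (a ^ (1 - 1 / p a) * t ^ (-(1 - 1 / p t))) ^ p t / t :=
            (div_eq_mul_inv _ _).symm
    -- integrability of the constant-over-t function
    have hi1 : IntegrableOn
        (fun t => x ^ (-(1 - 1 / p x)) / (2 * a ^ (-(1 - 1 / p a))) * t⁻¹)
        (Set.Ioc x (2*x)) := by
      rw [← intervalIntegrable_iff_integrableOn_Ioc_of_le hxle]
      apply IntervalIntegrable.const_mul
      apply intervalIntegral.intervalIntegrable_inv
      · intro y hy
        rw [Set.uIcc_of_le hxle] at hy
        exact (lt_of_lt_of_le hx0 hy.1).ne'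
      · exact continuousOn_id
    have hnonneg : 0 ≤ᵐ[volume.restrict (Set.Ioc a 1)]
        fun t => (a ^ (1 - 1 / p a) * t ^ (-(1 - 1 / p t))) ^ p t / t := by
      filter_upwards [ae_restrict_mem measurableSet_Ioc] with t ht
      have ht0 : 0 < t := lt_trans ha.1 ht.1
      exact div_nonneg (Real.rpow_nonneg (mul_nonneg (Real.rpow_nonneg ha.1.le _)
        (Real.rpow_nonneg ht0.le _)) _) ht0.le
    have h1 : ∫ t in Set.Ioc x (2*x),
        x ^ (-(1 - 1 / p x)) / (2 * a ^ (-(1 - 1 / p a))) * t⁻¹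
          ≤ ∫ t in Set.Ioc x (2*x),
            (a ^ (1 - 1 / p a) * t ^ (-(1 - 1 / p t))) ^ p t / t :=
      setIntegral_mono_on hi1 ((hHint a ha).mono_set hsub) measurableSet_Ioc hpoint
    have h2 : ∫ t in Set.Ioc x (2*x),
        x ^ (-(1 - 1 / p x)) / (2 * a ^ (-(1 - 1 / p a))) * t⁻¹
          = x ^ (-(1 - 1 / p x)) / (2 * a ^ (-(1 - 1 / p a))) * Real.log 2 := by
      rw [← intervalIntegral.integral_of_le hxle, intervalIntegral.integral_const_mul,
        _root_.integral_inv (notMem_uIcc_of_lt hx0 (by linarith))]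
      congr 1
      rw [mul_div_assoc, div_self hx0.ne', mul_one]
    have h3 : ∫ t in Set.Ioc x (2*x),
        (a ^ (1 - 1 / p a) * t ^ (-(1 - 1 / p t))) ^ p t / t
          ≤ ∫ t in Set.Ioc a 1,
            (a ^ (1 - 1 / p a) * t ^ (-(1 - 1 / p t))) ^ p t / t :=
      setIntegral_mono_set (hHint a ha) hnonneg (HasSubset.Subset.eventuallyLE hsub)
    have hfin : x ^ (-(1 - 1 / p x)) / (2 * a ^ (-(1 - 1 / p a))) * Real.log 2 ≤ C := by
      rw [← h2]
      exact le_trans h1 (le_trans h3 (hint a ha))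
    rw [div_mul_eq_mul_div, div_le_iff₀ (by positivity)] at hfin
    have hudv : x ^ (-(1 - 1 / p x)) ≤ 2 * C / Real.log 2 * a ^ (-(1 - 1 / p a)) := by
      rw [div_mul_eq_mul_div, le_div_iff₀ hlog2]
      nlinarith
    have hdc : 2 * C / Real.log 2 ≤ c := by linarith
    have hfin2 := mul_le_mul_of_nonneg_right hdc hv0.le
    linarith
  -- the final constant
  refine ⟨c ^ M * C, mul_pos (Real.rpow_pos_of_pos hc0 M) hC, ?_⟩
  intro a ha
  have haI : a ∈ Set.Ioc (0:ℝ) 1 := ⟨ha.1, ha.2.le⟩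
  have hv1 : 1 ≤ a ^ (-(1 - 1 / p a)) := hφ1 a haI
  have hv0 : 0 < a ^ (-(1 - 1 / p a)) := lt_of_lt_of_le one_pos hv1
  -- measurability and integrability of the target integrand
  obtain ⟨q, hq, hqp⟩ := clamp_meas p hmono ha.1 ha.2.le
  have hTmeas : AEStronglyMeasurable (fun t => t ^ (-(M * (1 - 1 / p t))) / t)
      (volume.restrict (Set.Ioc a 1)) := by
    have hmeas : Measurable fun t =>
        Real.exp (Real.log t * (-(M * (1 - 1 / q t)))) / t := by
      have hexp : Measurable fun t => -(M * (1 - 1 / q t)) :=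
        (measurable_const.mul (measurable_const.sub (measurable_const.div hq))).neg
      exact (Real.measurable_exp.comp (Real.measurable_log.mul hexp)).div measurable_id
    refine hmeas.aestronglyMeasurable.restrict.congr ?_
    filter_upwards [ae_restrict_mem measurableSet_Ioc] with t ht
    have ht0 : (0:ℝ) < t := lt_trans ha.1 ht.1
    rw [hqp t ⟨ht.1.le, ht.2⟩, ← Real.rpow_def_of_pos ht0]
  have hTint : IntegrableOn (fun t => t ^ (-(M * (1 - 1 / p t))) / t) (Set.Ioc a 1) := by
    refine integrableOn_of_bdd measurableSet_Ioc measure_Ioc_lt_top hTmeas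
      (B := a ^ (-M) * a⁻¹) ?_
    intro t ht
    have htI : t ∈ Set.Ioc (0:ℝ) 1 := ⟨lt_trans ha.1 ht.1, ht.2⟩
    have ht0 : 0 < t := htI.1
    have h1 : t ^ (-(M * (1 - 1 / p t))) ≤ t ^ (-M) := by
      apply Real.rpow_le_rpow_of_exponent_ge ht0 htI.2
      have := mul_le_of_le_one_right hM0 (he1 t htI)
      linarith
    have h2 : t ^ (-M) ≤ a ^ (-M) :=
      Real.rpow_le_rpow_of_nonpos ha.1 ht.1.le (neg_nonpos.2 hM0)
    have h3 : t⁻¹ ≤ a⁻¹ := inv_anti₀ ha.1 ht.1.le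
    have habs : |t ^ (-(M * (1 - 1 / p t))) / t| = t ^ (-(M * (1 - 1 / p t))) / t :=
      abs_of_nonneg (div_nonneg (Real.rpow_nonneg ht0.le _) ht0.le)
    rw [habs, div_eq_mul_inv]
    exact mul_le_mul (h1.trans h2) h3 (inv_nonneg.2 ht0.le) (Real.rpow_nonneg ha.1.le _)
  -- pointwise comparison on Ioo a 1
  have hpw : ∀ t ∈ Set.Ioo a 1, t ^ (-(M * (1 - 1 / p t))) / t
      ≤ c ^ M * a ^ (-(M * (1 - 1 / p a)))
          * ((a ^ (1 - 1 / p a) * t ^ (-(1 - 1 / p t))) ^ p t / t) := by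
    intro t ht
    have htI : t ∈ Set.Ioc (0:ℝ) 1 := ⟨lt_trans ha.1 ht.1, ht.2.le⟩
    have ht0 : 0 < t := htI.1
    have htM : p t ≤ M := hMub t ⟨htI.1, ht.2⟩
    have hu1 : 1 ≤ t ^ (-(1 - 1 / p t)) := hφ1 t htI
    have hu0 : 0 < t ^ (-(1 - 1 / p t)) := lt_of_lt_of_le one_pos hu1
    have hadx : t ^ (-(1 - 1 / p t)) ≤ c * a ^ (-(1 - 1 / p a)) :=
      had a ha t ⟨ht.1, ht.2.le⟩
    have hcv0 : 0 < c * a ^ (-(1 - 1 / p a)) := mul_pos hc0 hv0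
    have hr0 : 0 < t ^ (-(1 - 1 / p t)) / (c * a ^ (-(1 - 1 / p a))) :=
      div_pos hu0 hcv0
    have hr1 : t ^ (-(1 - 1 / p t)) / (c * a ^ (-(1 - 1 / p a))) ≤ 1 :=
      (div_le_one hcv0).2 hadx
    have e1 : (t ^ (-(1 - 1 / p t)) / (c * a ^ (-(1 - 1 / p a)))) ^ M
        ≤ (t ^ (-(1 - 1 / p t)) / (c * a ^ (-(1 - 1 / p a)))) ^ p t :=
      Real.rpow_le_rpow_of_exponent_ge hr0 hr1 htM
    have e2 : t ^ (-(M * (1 - 1 / p t)))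
        = (c * a ^ (-(1 - 1 / p a))) ^ M
            * (t ^ (-(1 - 1 / p t)) / (c * a ^ (-(1 - 1 / p a)))) ^ M := by
      rw [← Real.mul_rpow hcv0.le (div_nonneg hu0.le hcv0.le),
        mul_div_cancel₀ _ hcv0.ne']
      have hexp : -(M * (1 - 1 / p t)) = -(1 - 1 / p t) * M := by ring
      rw [hexp, Real.rpow_mul ht0.le]
    have hainv : a ^ (1 - 1 / p a) = (a ^ (-(1 - 1 / p a)))⁻¹ := by
      rw [Real.rpow_neg ha.1.le, inv_inv]
    have e3 : (t ^ (-(1 - 1 / p t)) / (c * a ^ (-(1 - 1 / p a)))) ^ p t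
        ≤ (a ^ (1 - 1 / p a) * t ^ (-(1 - 1 / p t))) ^ p t := by
      apply Real.rpow_le_rpow hr0.le ?_ (hppos t htI).le
      rw [hainv, inv_mul_eq_div]
      apply div_le_div_of_nonneg_left hu0.le hv0
      exact le_mul_of_one_le_left hv0.le hc1
    have e4 : t ^ (-(M * (1 - 1 / p t)))
        ≤ (c * a ^ (-(1 - 1 / p a))) ^ M
            * (a ^ (1 - 1 / p a) * t ^ (-(1 - 1 / p t))) ^ p t := by
      rw [e2]
      exact mul_le_mul_of_nonneg_left (e1.trans e3) (Real.rpow_nonneg hcv0.le M)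
    have e5 : (c * a ^ (-(1 - 1 / p a))) ^ M = c ^ M * a ^ (-(M * (1 - 1 / p a))) := by
      rw [Real.mul_rpow hc0.le hv0.le]
      congr 1
      have hexp : -(M * (1 - 1 / p a)) = -(1 - 1 / p a) * M := by ring
      rw [hexp, Real.rpow_mul ha.1.le]
    rw [e5] at e4
    calc t ^ (-(M * (1 - 1 / p t))) / t
        ≤ (c ^ M * a ^ (-(M * (1 - 1 / p a)))
            * (a ^ (1 - 1 / p a) * t ^ (-(1 - 1 / p t))) ^ p t) / t :=
          (div_le_div_iff_of_pos_right ht0).2 e4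
      _ = c ^ M * a ^ (-(M * (1 - 1 / p a)))
            * ((a ^ (1 - 1 / p a) * t ^ (-(1 - 1 / p t))) ^ p t / t) :=
          mul_div_assoc _ _ _
  -- integrate the pointwise comparison
  have hKnn : 0 ≤ c ^ M * a ^ (-(M * (1 - 1 / p a))) :=
    mul_nonneg (Real.rpow_nonneg hc0.le M) (Real.rpow_nonneg ha.1.le _)
  rw [MeasureTheory.integral_Ioc_eq_integral_Ioo]
  have step : ∫ t in Set.Ioo a 1, t ^ (-(M * (1 - 1 / p t))) / t
      ≤ ∫ t in Set.Ioo a 1, c ^ M * a ^ (-(M * (1 - 1 / p a)))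
          * ((a ^ (1 - 1 / p a) * t ^ (-(1 - 1 / p t))) ^ p t / t) :=
    setIntegral_mono_on (hTint.mono_set Set.Ioo_subset_Ioc_self)
      (((hHint a ha).mono_set Set.Ioo_subset_Ioc_self).const_mul _)
      measurableSet_Ioo hpw
  rw [MeasureTheory.integral_const_mul] at step
  have hIeq : ∫ t in Set.Ioo a 1,
      (a ^ (1 - 1 / p a) * t ^ (-(1 - 1 / p t))) ^ p t / t
        = ∫ t in Set.Ioc a 1,
          (a ^ (1 - 1 / p a) * t ^ (-(1 - 1 / p t))) ^ p t / t :=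
    (MeasureTheory.integral_Ioc_eq_integral_Ioo).symm
  calc ∫ t in Set.Ioo a 1, t ^ (-(M * (1 - 1 / p t))) / t
      ≤ c ^ M * a ^ (-(M * (1 - 1 / p a)))
          * ∫ t in Set.Ioo a 1, (a ^ (1 - 1 / p a) * t ^ (-(1 - 1 / p t))) ^ p t / t :=
        step
    _ ≤ c ^ M * a ^ (-(M * (1 - 1 / p a))) * C := by
        apply mul_le_mul_of_nonneg_left _ hKnn
        rw [hIeq]
        exact hint a ha
    _ = c ^ M * C * a ^ (-(M * (1 - 1 / p a))) := by ring
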